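/- Let U be a C^2 function on [M,∞) with U''(x)>0 for all x ≥ M, lim_{x→∞} U''(x)/(U'(x))^2 = 0, and suppose x ↦ e^{-U(x)} is integrable on [M,∞). Then ∫_x^∞ e^{-U(t)} dt is asymptotically equivalent to e^{-U(x)}/U'(x) as x → ∞. -/

import Mathlib

open Real Filter MeasureTheory

theorem laplace_tail_equivalence (M : ℝ) (hM : 0 < M) (U : ℝ → ℝ)
    (hU : ContDiffOn ℝ 2 U (Set.Ici M))
    (hU'' : ∀ x ∈ Set.Ici M, 0 < deriv (deriv U) x)
    (hlim : Tendsto (fun x => deriv (deriv U) x / (deriv U x) ^ 2) atTop (nhds 0))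
    (hint : IntegrableOn (fun x => Real.exp (-U x)) (Set.Ici M)) :
    Tendsto (fun x => (∫ t in Set.Ici x, Real.exp (-U t)) / (Real.exp (-U x) / deriv U x))
      atTop (nhds 1) := by
  -- basic smoothness on the open set
  have hUo : ContDiffOn ℝ 2 U (Set.Ioi M) := hU.mono Set.Ioi_subset_Ici_self
  have hUdiff : ∀ x ∈ Set.Ioi M, HasDerivAt U (deriv U x) x := by
    intro x hx
    have : DifferentiableAt ℝ U x :=
      (hUo.differentiableOn (by norm_num)).differentiableAt (isOpen_Ioi.mem_nhds hx)
    exact this.hasDerivAt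
  have hU' : ContDiffOn ℝ 1 (deriv U) (Set.Ioi M) :=
    hUo.deriv_of_isOpen isOpen_Ioi (by norm_num)
  have hU'diff : ∀ x ∈ Set.Ioi M, HasDerivAt (deriv U) (deriv (deriv U) x) x := by
    intro x hx
    have : DifferentiableAt ℝ (deriv U) x :=
      (hU'.differentiableOn (by norm_num)).differentiableAt (isOpen_Ioi.mem_nhds hx)
    exact this.hasDerivAt
  have hU'cont : ContinuousOn (deriv U) (Set.Ioi M) := hU'.continuousOn
  have hUcont : ContinuousOn U (Set.Ioi M) := hUo.continuousOn
  -- deriv U is strictly monotone on Ioi M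
  have hmono : StrictMonoOn (deriv U) (Set.Ioi M) := by
    apply strictMonoOn_of_deriv_pos (convex_Ioi M) hU'cont
    intro x hx
    rw [interior_Ioi] at hx
    exact hU'' x (Set.mem_Ici.mpr hx.le)
  -- there is a point where deriv U is positive
  have hpos : ∃ x0 > M, 0 < deriv U x0 := by
    by_contra h
    push_neg at h
    have hsub : Set.Ici (M+1) ⊆ Set.Ioi M := fun x hx => lt_of_lt_of_le (by linarith : M < M + 1) hx
    have hanti : AntitoneOn U (Set.Ici (M+1)) := by
      apply antitoneOn_of_deriv_nonpos (convex_Ici _) (hUcont.mono hsub)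
      · intro x hx
        rw [interior_Ici] at hx
        exact (hUdiff x (hsub (Set.mem_Ici.mpr hx.le))).differentiableAt.differentiableWithinAt
      · intro x hx
        rw [interior_Ici] at hx
        exact h x (by linarith [Set.mem_Ioi.mp hx])
    have hconst : IntegrableOn (fun _ : ℝ => Real.exp (-U (M+1))) (Set.Ici (M+1)) := by
      apply Integrable.mono' (hint.mono_set (Set.Ici_subset_Ici.mpr (by linarith)))
        aestronglyMeasurable_const
      apply (ae_restrict_iff' measurableSet_Ici).mpr
      apply ae_of_all
      intro x hx
      rw [Real.norm_eq_abs, abs_of_pos (Real.exp_pos _)]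
      exact Real.exp_le_exp.mpr (neg_le_neg (hanti Set.self_mem_Ici hx hx))
    rcases integrable_const_iff.mp hconst with h0 | hfin
    · exact (Real.exp_pos _).ne' h0
    · have := hfin.measure_univ_lt_top
      rw [Measure.restrict_apply_univ] at this
      simp [Real.volume_Ici] at this
  obtain ⟨x0, hx0M, hx0pos⟩ := hpos
  set c : ℝ := deriv U x0 with hc
  have hderiv_gt : ∀ x > x0, c < deriv U x := by
    intro x hx
    exact hmono (Set.mem_Ioi.mpr hx0M) (Set.mem_Ioi.mpr (hx0M.trans hx)) hx
  -- U tends to infinity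
  have hUtop : Tendsto U atTop atTop := by
    have hsub : Set.Ici x0 ⊆ Set.Ioi M := fun x hx => lt_of_lt_of_le hx0M hx
    have hder : ∀ x ∈ Set.Ioi M, HasDerivAt (fun y => U y - c * y) (deriv U x - c) x := by
      intro x hx
      have := (hUdiff x hx).sub ((hasDerivAt_id x).const_mul c)
      simp only [mul_one] at this
      exact this
    have hmonoU : MonotoneOn (fun x => U x - c * x) (Set.Ici x0) := by
      apply monotoneOn_of_deriv_nonneg (convex_Ici _)
      · exact (hUcont.mono hsub).sub (continuousOn_const.mul continuousOn_id)
      · intro x hx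
        rw [interior_Ici] at hx
        exact (hder x (hsub (Set.mem_Ioi.mp hx).le)).differentiableAt.differentiableWithinAt
      · intro x hx
        rw [interior_Ici] at hx
        rw [(hder x (hsub (Set.mem_Ioi.mp hx).le)).deriv]
        have := hderiv_gt x hx
        linarith
    have hev : ∀ᶠ x in atTop, c * x + (U x0 - c * x0) ≤ U x := by
      filter_upwards [eventually_ge_atTop x0] with x hx
      have h2 : U x0 - c * x0 ≤ U x - c * x := hmonoU Set.self_mem_Ici (Set.mem_Ici.mpr hx) hx
      linarith
    exact tendsto_atTop_mono' atTop hev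
      (tendsto_atTop_add_const_right _ _ (tendsto_id.const_mul_atTop hx0pos))
  have hexp : Tendsto (fun x => Real.exp (-U x)) atTop (nhds 0) :=
    Real.tendsto_exp_atBot.comp (tendsto_neg_atTop_atBot.comp hUtop)
  -- the denominator tends to 0
  have hg0 : Tendsto (fun x => Real.exp (-U x) / deriv U x) atTop (nhds 0) := by
    have hub : Tendsto (fun x => Real.exp (-U x) / c) atTop (nhds 0) := by
      simpa using hexp.div_const c
    apply tendsto_of_tendsto_of_tendsto_of_le_of_le' tendsto_const_nhds hub
    · filter_upwards [eventually_gt_atTop x0] with x hx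
      exact div_nonneg (Real.exp_pos _).le (lt_trans hx0pos (hderiv_gt x hx)).le
    · filter_upwards [eventually_gt_atTop x0] with x hx
      exact div_le_div_of_nonneg_left (Real.exp_pos _).le hx0pos (hderiv_gt x hx).le
  -- the numerator tends to 0
  have hintM : IntegrableOn (fun t => Real.exp (-U t)) (Set.Ioi M) :=
    hint.mono_set Set.Ioi_subset_Ici_self
  have hsplit : ∀ x, M ≤ x → (∫ t in Set.Ici x, Real.exp (-U t)) =
      (∫ t in Set.Ioi M, Real.exp (-U t)) - ∫ t in M..x, Real.exp (-U t) := by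
    intro x hx
    have hu : Set.Ioc M x ∪ Set.Ioi x = Set.Ioi M := Set.Ioc_union_Ioi_eq_Ioi hx
    have hdisj : Disjoint (Set.Ioc M x) (Set.Ioi x) := by
      apply Set.disjoint_left.mpr
      intro t ht ht'
      exact absurd ht.2 (not_le.mpr ht')
    have h1 : (∫ t in Set.Ioi M, Real.exp (-U t)) =
        (∫ t in Set.Ioc M x, Real.exp (-U t)) + ∫ t in Set.Ioi x, Real.exp (-U t) := by
      rw [← hu]
      exact setIntegral_union hdisj measurableSet_Ioi
        (hintM.mono_set (by rw [← hu]; exact Set.subset_union_left))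
        (hintM.mono_set (by rw [← hu]; exact Set.subset_union_right))
    rw [MeasureTheory.integral_Ici_eq_integral_Ioi, intervalIntegral.integral_of_le hx, h1]
    ring
  have hf0 : Tendsto (fun x => ∫ t in Set.Ici x, Real.exp (-U t)) atTop (nhds 0) := by
    have h1 : Tendsto (fun x => ∫ t in M..x, Real.exp (-U t)) atTop
        (nhds (∫ t in Set.Ioi M, Real.exp (-U t))) :=
      intervalIntegral_tendsto_integral_Ioi M hintM tendsto_id
    have h2 := (tendsto_const_nhds (x := ∫ t in Set.Ioi M, Real.exp (-U t)) (f := atTop)).sub h1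
    rw [sub_self] at h2
    apply h2.congr'
    filter_upwards [eventually_ge_atTop M] with x hx
    exact (hsplit x hx).symm
  -- derivative of the numerator
  have hf' : ∀ᶠ x in atTop, HasDerivAt (fun y => ∫ t in Set.Ici y, Real.exp (-U t))
      (-(Real.exp (-U x))) x := by
    have hcontExp : ContinuousOn (fun t => Real.exp (-U t)) (Set.Ioi M) :=
      Real.continuous_exp.comp_continuousOn hUcont.neg
    filter_upwards [eventually_gt_atTop M] with x hx
    have hiv : IntervalIntegrable (fun t => Real.exp (-U t)) volume M x := by
      rw [intervalIntegrable_iff_integrableOn_Ioc_of_le hx.le]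
      exact hintM.mono_set Set.Ioc_subset_Ioi_self
    have hmeas : StronglyMeasurableAtFilter (fun t => Real.exp (-U t)) (nhds x) :=
      hcontExp.stronglyMeasurableAtFilter isOpen_Ioi x hx
    have hctsAt : ContinuousAt (fun t => Real.exp (-U t)) x :=
      hcontExp.continuousAt (isOpen_Ioi.mem_nhds hx)
    have hD : HasDerivAt (fun y => (∫ t in Set.Ioi M, Real.exp (-U t)) -
        ∫ t in M..y, Real.exp (-U t)) (-(Real.exp (-U x))) x := by
      have := intervalIntegral.integral_hasDerivAt_right hiv hmeas hctsAt
      have h2 := (hasDerivAt_const x (∫ t in Set.Ioi M, Real.exp (-U t))).sub this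
      simp only [zero_sub] at h2
      exact h2
    apply hD.congr_of_eventuallyEq
    filter_upwards [isOpen_Ioi.mem_nhds hx] with y hy
    exact hsplit y (le_of_lt hy)
  -- derivative of the denominator
  have hg' : ∀ᶠ x in atTop, HasDerivAt (fun y => Real.exp (-U y) / deriv U y)
      (-(Real.exp (-U x)) * (1 + deriv (deriv U) x / (deriv U x) ^ 2)) x := by
    filter_upwards [eventually_gt_atTop x0] with x hx
    have hxM : x ∈ Set.Ioi M := Set.mem_Ioi.mpr (hx0M.trans hx)
    have hd : 0 < deriv U x := lt_trans hx0pos (hderiv_gt x hx)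
    have hE : HasDerivAt (fun y => Real.exp (-U y)) (Real.exp (-U x) * -(deriv U x)) x :=
      ((hUdiff x hxM).neg).exp
    have hq : HasDerivAt (fun y => Real.exp (-U y) / deriv U y) _ x := hE.div (hU'diff x hxM) hd.ne'
    convert hq using 1
    field_simp
    ring
  -- g' nonzero and ratio of derivatives tends to 1
  have hr1 : Tendsto (fun x => 1 + deriv (deriv U) x / (deriv U x) ^ 2) atTop (nhds 1) := by
    have := (tendsto_const_nhds (x := (1:ℝ)) (f := atTop)).add hlim
    simpa using this
  have hg'ne : ∀ᶠ x in atTop, -(Real.exp (-U x)) * (1 + deriv (deriv U) x / (deriv U x) ^ 2) ≠ 0 := by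
    have hev : ∀ᶠ x in atTop, (1:ℝ)/2 < 1 + deriv (deriv U) x / (deriv U x) ^ 2 :=
      hr1.eventually (lt_mem_nhds (by norm_num : (1:ℝ)/2 < 1))
    filter_upwards [hev] with x hx
    have h1 : (0:ℝ) < 1 + deriv (deriv U) x / (deriv U x) ^ 2 := by linarith
    have h2 : Real.exp (-U x) > 0 := Real.exp_pos _
    intro h
    rcases mul_eq_zero.mp h with h' | h'
    · exact absurd h' (neg_ne_zero.mpr (Real.exp_pos _).ne')
    · exact h1.ne' h'
  have hdiv : Tendsto (fun x => (-(Real.exp (-U x))) /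
      (-(Real.exp (-U x)) * (1 + deriv (deriv U) x / (deriv U x) ^ 2))) atTop (nhds 1) := by
    have hev : ∀ᶠ x in atTop, (-(Real.exp (-U x))) /
        (-(Real.exp (-U x)) * (1 + deriv (deriv U) x / (deriv U x) ^ 2))
        = 1 / (1 + deriv (deriv U) x / (deriv U x) ^ 2) := by
      filter_upwards with x
      have h2 : Real.exp (-U x) ≠ 0 := (Real.exp_pos _).ne'
      rw [neg_mul, neg_div_neg_eq, div_mul_cancel_left₀ h2, one_div]
    rw [tendsto_congr' hev]
    have := (tendsto_const_nhds (x := (1:ℝ)) (f := atTop)).div hr1 one_ne_zero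
    simpa [Pi.div_def] using this
  exact HasDerivAt.lhopital_zero_atTop hf' hg' hg'ne hf0 hg0 hdiv
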